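/- Let m ≥ n, let A ∈ ℝ^{m×n} have full rank n, and let u_ℓ, u, p₆ be positive reals. Suppose A + ΔA = Ũ_ℓ Σ_ℓ (Ṽ + ΔṼ)ᵀ, where Ũ_ℓ ∈ ℝ^{m×n} has orthonormal columns, Σ_ℓ ∈ ℝ^{n×n} is diagonal with nonnegative entries, Ṽ + ΔṼ ∈ ℝ^{n×n} is orthogonal, and the perturbations satisfy ‖ΔA‖₂ ≤ p₆u_ℓ‖A‖₂, ‖ΔṼ‖₂ ≤ p₆u, and ‖ṼᵀṼ − I‖₂ ≤ p₆u. If 5p₆(u_ℓ + u)κ₂(A) ≤ 1, then the preconditioned matrix Ã = AṼ satisfies κ₂ᴰ(Ã) ≤ 3. -/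

import Mathlib

open scoped BigOperators
open Matrix

/-- Euclidean norm of a vector in `ℝ^m`. -/
noncomputable def vecNorm {m : ℕ} (v : Fin m → ℝ) : ℝ :=
  Real.sqrt (∑ i, v i ^ 2)

/-- The `k`-th largest singular value of a real `m × n` matrix
(`k = 0` gives the largest). -/
noncomputable def sval {m n : ℕ} (A : Matrix (Fin m) (Fin n) ℝ) (k : Fin n) : ℝ :=
  Real.sqrt
    (((Matrix.isHermitian_conjTranspose_mul_self A).eigenvalues ∘
      Tuple.sort (Matrix.isHermitian_conjTranspose_mul_self A).eigenvalues) k.rev)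

/-- Spectral norm: the largest singular value. -/
noncomputable def specNorm {m n : ℕ} (A : Matrix (Fin m) (Fin n) ℝ) : ℝ :=
  ⨆ k, sval A k

/-- Smallest singular value. -/
noncomputable def sMin {m n : ℕ} (A : Matrix (Fin m) (Fin n) ℝ) : ℝ :=
  ⨅ k, sval A k

/-- Frobenius norm. -/
noncomputable def frobNorm {m n : ℕ} (A : Matrix (Fin m) (Fin n) ℝ) : ℝ :=
  Real.sqrt (∑ i, ∑ j, (A i j) ^ 2)

/-- Frobenius norm of the off-diagonal part of a square matrix. -/
noncomputable def offF {n : ℕ} (M : Matrix (Fin n) (Fin n) ℝ) : ℝ :=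
  frobNorm (M - Matrix.diagonal (fun i => M i i))

/-- Diagonal matrix of inverse column norms `D(A)`. -/
noncomputable def colScale {m n : ℕ} (A : Matrix (Fin m) (Fin n) ℝ) :
    Matrix (Fin n) (Fin n) ℝ :=
  Matrix.diagonal (fun j => (vecNorm (fun i => A i j))⁻¹)

/-- Condition number `κ₂(A) = σ_max(A) / σ_min(A)`. -/
noncomputable def kappa2 {m n : ℕ} (A : Matrix (Fin m) (Fin n) ℝ) : ℝ :=
  specNorm A / sMin A

/-- One-sided scaled condition number `κ₂ᴰ(A) = κ₂(A · D(A))`. -/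
noncomputable def scaledCond {m n : ℕ} (A : Matrix (Fin m) (Fin n) ℝ) : ℝ :=
  kappa2 (A * colScale A)

/-- Entrywise absolute value of a matrix. -/
def matAbs {m n : ℕ} (A : Matrix (Fin m) (Fin n) ℝ) : Matrix (Fin m) (Fin n) ℝ :=
  fun i j => |A i j|

noncomputable def toE {k : ℕ} (v : Fin k → ℝ) : EuclideanSpace ℝ (Fin k) :=
  (WithLp.equiv 2 (Fin k → ℝ)).symm v

@[simp] lemma toE_apply {k : ℕ} (v : Fin k → ℝ) (i : Fin k) : toE v i = v i := rfl

lemma vecNorm_eq_norm {k : ℕ} (v : Fin k → ℝ) : vecNorm v = ‖toE v‖ := by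
  rw [EuclideanSpace.norm_eq]
  simp [vecNorm, Real.norm_eq_abs, sq_abs]

lemma vecNorm_nonneg {k : ℕ} (v : Fin k → ℝ) : 0 ≤ vecNorm v := Real.sqrt_nonneg _

lemma toE_add {k : ℕ} (v w : Fin k → ℝ) : toE (v + w) = toE v + toE w := rfl
lemma toE_sub {k : ℕ} (v w : Fin k → ℝ) : toE (v - w) = toE v - toE w := rfl

lemma vecNorm_add_le {k : ℕ} (v w : Fin k → ℝ) :
    vecNorm (v + w) ≤ vecNorm v + vecNorm w := by
  rw [vecNorm_eq_norm, vecNorm_eq_norm, vecNorm_eq_norm, toE_add]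
  exact norm_add_le _ _

lemma dotProduct_self_eq {k : ℕ} (v : Fin k → ℝ) : v ⬝ᵥ v = vecNorm v ^ 2 := by
  rw [vecNorm, Real.sq_sqrt (by positivity)]
  simp [dotProduct, sq]

lemma inner_eq_dot {k : ℕ} (v w : Fin k → ℝ) :
    (inner ℝ (toE v) (toE w) : ℝ) = v ⬝ᵥ w := by
  simp [PiLp.inner_apply, dotProduct, RCLike.inner_apply, mul_comm]

-- quadratic-form bounds from eigenvalue bounds
lemma quad_form_bounds {k : ℕ} (M : Matrix (Fin k) (Fin k) ℝ) (hM : M.IsHermitian)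
    (α β : ℝ) (hl : ∀ i, α ≤ hM.eigenvalues i) (hu : ∀ i, hM.eigenvalues i ≤ β)
    (x : Fin k → ℝ) :
    α * vecNorm x ^ 2 ≤ x ⬝ᵥ (M *ᵥ x) ∧ x ⬝ᵥ (M *ᵥ x) ≤ β * vecNorm x ^ 2 := by
  classical
  set b := hM.eigenvectorBasis with hb
  have hMT : Mᵀ = M := by
    have h := hM
    unfold Matrix.IsHermitian at h
    simpa using h
  have h2 : ∀ (y : Fin k → ℝ) (i : Fin k),
      (⇑(b i) : Fin k → ℝ) ⬝ᵥ (M *ᵥ y) = hM.eigenvalues i * ((⇑(b i) : Fin k → ℝ) ⬝ᵥ y) := by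
    intro y i
    have hstep : (⇑(b i) : Fin k → ℝ) ⬝ᵥ (M *ᵥ y) = (M *ᵥ (⇑(b i) : Fin k → ℝ)) ⬝ᵥ y := by
      rw [dotProduct_mulVec]
      congr 1
      rw [← vecMul_transpose, hMT]
    rw [hstep, hM.mulVec_eigenvectorBasis, smul_dotProduct, smul_eq_mul]
  have key : ∀ y : Fin k → ℝ,
      y ⬝ᵥ (M *ᵥ y) = ∑ i, hM.eigenvalues i * ((inner ℝ (toE y) (b i) : ℝ)) ^ 2 := by
    intro y
    have h1 := b.sum_inner_mul_inner (toE y) (toE (M *ᵥ y))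
    have h3 : ∀ i, (inner ℝ (b i) (toE (M *ᵥ y)) : ℝ)
        = hM.eigenvalues i * (inner ℝ (b i) (toE y) : ℝ) := by
      intro i
      have e1 : (inner ℝ (b i) (toE (M *ᵥ y)) : ℝ) = (⇑(b i) : Fin k → ℝ) ⬝ᵥ (M *ᵥ y) := by
        rw [← inner_eq_dot]; rfl
      have e2 : (inner ℝ (b i) (toE y) : ℝ) = (⇑(b i) : Fin k → ℝ) ⬝ᵥ y := by
        rw [← inner_eq_dot]; rfl
      rw [e1, e2, h2]
    calc y ⬝ᵥ (M *ᵥ y) = (inner ℝ (toE y) (toE (M *ᵥ y)) : ℝ) := (inner_eq_dot _ _).symm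
    _ = ∑ i, (inner ℝ (toE y) (b i) : ℝ) * (inner ℝ (b i) (toE (M *ᵥ y)) : ℝ) := h1.symm
    _ = ∑ i, hM.eigenvalues i * ((inner ℝ (toE y) (b i) : ℝ)) ^ 2 := by
        refine Finset.sum_congr rfl fun i _ => ?_
        rw [h3 i, real_inner_comm (b i) (toE y)]
        ring
  have hnorm : ∀ y : Fin k → ℝ,
      vecNorm y ^ 2 = ∑ i, ((inner ℝ (toE y) (b i) : ℝ)) ^ 2 := by
    intro y
    have h1 := b.sum_inner_mul_inner (toE y) (toE y)
    calc vecNorm y ^ 2 = y ⬝ᵥ y := (dotProduct_self_eq y).symm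
    _ = (inner ℝ (toE y) (toE y) : ℝ) := (inner_eq_dot _ _).symm
    _ = ∑ i, (inner ℝ (toE y) (b i) : ℝ) * (inner ℝ (b i) (toE y) : ℝ) := h1.symm
    _ = ∑ i, ((inner ℝ (toE y) (b i) : ℝ)) ^ 2 := by
        refine Finset.sum_congr rfl fun i _ => ?_
        rw [real_inner_comm (b i) (toE y)]; ring
  constructor
  · rw [key x, hnorm x, Finset.mul_sum]
    exact Finset.sum_le_sum fun i _ => mul_le_mul_of_nonneg_right (hl i) (sq_nonneg _)
  · rw [key x, hnorm x, Finset.mul_sum]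
    exact Finset.sum_le_sum fun i _ => mul_le_mul_of_nonneg_right (hu i) (sq_nonneg _)

section svlemmas
set_option linter.unusedSectionVars false
variable {m n : ℕ} (B : Matrix (Fin m) (Fin n) ℝ)

noncomputable abbrev eg := (Matrix.isHermitian_conjTranspose_mul_self B).eigenvalues

lemma sval_eq (k : Fin n) :
    sval B k = Real.sqrt (eg B (Tuple.sort (eg B) k.rev)) := rfl

lemma sval_nonneg (k : Fin n) : 0 ≤ sval B k := Real.sqrt_nonneg _

lemma eg_nonneg (i : Fin n) : 0 ≤ eg B i :=
  Matrix.eigenvalues_conjTranspose_mul_self_nonneg B i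

lemma exists_sval_eq (i : Fin n) : ∃ k, sval B k = Real.sqrt (eg B i) := by
  refine ⟨((Tuple.sort (eg B)).symm i).rev, ?_⟩
  rw [sval_eq, Fin.rev_rev, Equiv.apply_symm_apply]

lemma dot_BtB (x : Fin n → ℝ) :
    x ⬝ᵥ ((Bᴴ * B) *ᵥ x) = (B *ᵥ x) ⬝ᵥ (B *ᵥ x) := by
  rw [Matrix.conjTranspose_eq_transpose_of_trivial, ← Matrix.mulVec_mulVec,
    Matrix.dotProduct_mulVec, Matrix.vecMul_transpose]

lemma eg_eval (i : Fin n) :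
    eg B i = vecNorm (B *ᵥ ⇑((Matrix.isHermitian_conjTranspose_mul_self B).eigenvectorBasis i)) ^ 2
    := by
  set hM := Matrix.isHermitian_conjTranspose_mul_self B
  set v : Fin n → ℝ := ⇑(hM.eigenvectorBasis i) with hv
  have hnv : vecNorm v = 1 := by
    rw [vecNorm_eq_norm]
    have : toE v = hM.eigenvectorBasis i := by rfl
    rw [this]
    exact hM.eigenvectorBasis.orthonormal.1 i
  have h1 : (Bᴴ * B) *ᵥ v = eg B i • v := hM.mulVec_eigenvectorBasis i
  have h2 : v ⬝ᵥ ((Bᴴ * B) *ᵥ v) = eg B i := by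
    rw [h1, dotProduct_smul, smul_eq_mul, dotProduct_self_eq, hnv]
    ring
  rw [← h2, dot_BtB, dotProduct_self_eq]

variable [Nonempty (Fin n)]

lemma specNorm_le_of_eig {β : ℝ} (h : ∀ i, eg B i ≤ β) : specNorm B ≤ Real.sqrt β :=
  ciSup_le fun _ => Real.sqrt_le_sqrt (h _)

lemma le_sMin_of_eig {α : ℝ} (h : ∀ i, α ≤ eg B i) : Real.sqrt α ≤ sMin B :=
  le_ciInf fun _ => Real.sqrt_le_sqrt (h _)

lemma sMin_nonneg : 0 ≤ sMin B := le_ciInf fun k => sval_nonneg B k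

lemma specNorm_nonneg : 0 ≤ specNorm B :=
  le_trans (sval_nonneg B (Classical.arbitrary _))
    (le_ciSup (Set.Finite.bddAbove (Set.finite_range _)) _)

lemma eg_le_sq_specNorm (i : Fin n) : eg B i ≤ specNorm B ^ 2 := by
  obtain ⟨k, hk⟩ := exists_sval_eq B i
  have h1 : sval B k ≤ specNorm B := le_ciSup (Set.Finite.bddAbove (Set.finite_range _)) k
  have h2 : Real.sqrt (eg B i) ≤ specNorm B := hk ▸ h1
  calc eg B i = Real.sqrt (eg B i) ^ 2 := (Real.sq_sqrt (eg_nonneg B i)).symm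
  _ ≤ specNorm B ^ 2 := pow_le_pow_left₀ (Real.sqrt_nonneg _) h2 2

lemma sq_sMin_le_eg (i : Fin n) : sMin B ^ 2 ≤ eg B i := by
  obtain ⟨k, hk⟩ := exists_sval_eq B i
  have h1 : sMin B ≤ sval B k := ciInf_le (Set.Finite.bddBelow (Set.finite_range _)) k
  have h2 : sMin B ≤ Real.sqrt (eg B i) := hk ▸ h1
  calc sMin B ^ 2 ≤ Real.sqrt (eg B i) ^ 2 := pow_le_pow_left₀ (sMin_nonneg B) h2 2
  _ = eg B i := Real.sq_sqrt (eg_nonneg B i)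

lemma sq_vecNorm_mulVec_bounds (x : Fin n → ℝ) :
    sMin B ^ 2 * vecNorm x ^ 2 ≤ vecNorm (B *ᵥ x) ^ 2 ∧
      vecNorm (B *ᵥ x) ^ 2 ≤ specNorm B ^ 2 * vecNorm x ^ 2 := by
  have h := quad_form_bounds (Bᴴ * B) (Matrix.isHermitian_conjTranspose_mul_self B)
    (sMin B ^ 2) (specNorm B ^ 2) (sq_sMin_le_eg B) (eg_le_sq_specNorm B) x
  rwa [dot_BtB, dotProduct_self_eq] at h

lemma vecNorm_mulVec_le (x : Fin n → ℝ) : vecNorm (B *ᵥ x) ≤ specNorm B * vecNorm x := by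
  have h := (sq_vecNorm_mulVec_bounds B x).2
  have h2 : vecNorm (B *ᵥ x) ^ 2 ≤ (specNorm B * vecNorm x) ^ 2 := by rw [mul_pow]; exact h
  calc vecNorm (B *ᵥ x) = Real.sqrt (vecNorm (B *ᵥ x) ^ 2) :=
        (Real.sqrt_sq (vecNorm_nonneg _)).symm
  _ ≤ Real.sqrt ((specNorm B * vecNorm x) ^ 2) := Real.sqrt_le_sqrt h2
  _ = specNorm B * vecNorm x :=
      Real.sqrt_sq (mul_nonneg (specNorm_nonneg B) (vecNorm_nonneg _))

lemma sMin_mul_le_vecNorm_mulVec (x : Fin n → ℝ) :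
    sMin B * vecNorm x ≤ vecNorm (B *ᵥ x) := by
  have h := (sq_vecNorm_mulVec_bounds B x).1
  have h2 : (sMin B * vecNorm x) ^ 2 ≤ vecNorm (B *ᵥ x) ^ 2 := by rw [mul_pow]; exact h
  calc sMin B * vecNorm x = Real.sqrt ((sMin B * vecNorm x) ^ 2) := by
        rw [Real.sqrt_sq (mul_nonneg (sMin_nonneg B) (vecNorm_nonneg _))]
  _ ≤ Real.sqrt (vecNorm (B *ᵥ x) ^ 2) := Real.sqrt_le_sqrt h2
  _ = vecNorm (B *ᵥ x) := Real.sqrt_sq (vecNorm_nonneg _)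

lemma kappa2_le_of_bounds {α β : ℝ} (hα : 0 < α)
    (h : ∀ x : Fin n → ℝ, α * vecNorm x ≤ vecNorm (B *ᵥ x) ∧
      vecNorm (B *ᵥ x) ≤ β * vecNorm x) :
    kappa2 B ≤ β / α := by
  have hβ : 0 ≤ β := by
    set v : Fin n → ℝ := ⇑((Matrix.isHermitian_conjTranspose_mul_self B).eigenvectorBasis
      (Classical.arbitrary _))
    have hnv : vecNorm v = 1 := by
      rw [vecNorm_eq_norm]
      exact (Matrix.isHermitian_conjTranspose_mul_self B).eigenvectorBasis.orthonormal.1 _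
    have hu := (h v).2
    rw [hnv, mul_one] at hu
    exact le_trans (vecNorm_nonneg _) hu
  have heig : ∀ i, α ^ 2 ≤ eg B i ∧ eg B i ≤ β ^ 2 := by
    intro i
    set v : Fin n → ℝ := ⇑((Matrix.isHermitian_conjTranspose_mul_self B).eigenvectorBasis i)
    have hnv : vecNorm v = 1 := by
      rw [vecNorm_eq_norm]
      exact (Matrix.isHermitian_conjTranspose_mul_self B).eigenvectorBasis.orthonormal.1 i
    have hev := eg_eval B i
    obtain ⟨hl, hu⟩ := h v
    rw [hnv, mul_one] at hl hu
    exact ⟨hev ▸ pow_le_pow_left₀ hα.le hl 2, hev ▸ pow_le_pow_left₀ (vecNorm_nonneg _) hu 2⟩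
  have hs : specNorm B ≤ β := by
    have h1 := specNorm_le_of_eig B (fun i => (heig i).2)
    rwa [Real.sqrt_sq hβ] at h1
  have hm : α ≤ sMin B := by
    have h1 := le_sMin_of_eig B (fun i => (heig i).1)
    rwa [Real.sqrt_sq hα.le] at h1
  unfold kappa2
  exact div_le_div₀ hβ hs hα hm

lemma sMin_pos_of_rank (h : B.rank = n) : 0 < sMin B := by
  have hrk : (Bᴴ * B).rank = B.rank := by
    rw [Matrix.conjTranspose_eq_transpose_of_trivial]; exact Matrix.rank_transpose_mul_self B
  have hcard : Fintype.card {i // eg B i ≠ 0} = n := by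
    rw [← (Matrix.isHermitian_conjTranspose_mul_self B).rank_eq_card_non_zero_eigs, hrk, h]
  have hall : ∀ i, eg B i ≠ 0 := by
    by_contra hc
    push_neg at hc
    obtain ⟨i0, hi0⟩ := hc
    have hlt : Fintype.card {i // eg B i ≠ 0} < Fintype.card (Fin n) :=
      Fintype.card_subtype_lt (x := i0) (by simpa using hi0)
    rw [hcard, Fintype.card_fin] at hlt; exact lt_irrefl _ hlt
  obtain ⟨i0, -, hmin⟩ := Finset.exists_min_image Finset.univ (eg B)
    ⟨Classical.arbitrary _, Finset.mem_univ _⟩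
  have hpos : 0 < eg B i0 := lt_of_le_of_ne (eg_nonneg B i0) (Ne.symm (hall i0))
  exact lt_of_lt_of_le (Real.sqrt_pos.mpr hpos)
    (le_sMin_of_eig B (fun i => hmin i (Finset.mem_univ i)))

end svlemmas

lemma vecNorm_eq_sqrt_dot {k : ℕ} (v : Fin k → ℝ) : vecNorm v = Real.sqrt (v ⬝ᵥ v) := by
  rw [dotProduct_self_eq, Real.sqrt_sq (vecNorm_nonneg _)]

lemma vecNorm_neg {k : ℕ} (v : Fin k → ℝ) : vecNorm (-v) = vecNorm v := by
  simp [vecNorm]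

lemma vecNorm_sub_le {k : ℕ} (v w : Fin k → ℝ) :
    vecNorm (v - w) ≤ vecNorm v + vecNorm w := by
  have := vecNorm_add_le v (-w)
  rw [vecNorm_neg] at this
  simpa [sub_eq_add_neg] using this

/-- `‖X‖ ≤ ‖Y‖ + ‖X - Y‖` and `‖Y‖ - ‖X - Y‖ ≤ ‖X‖`. -/
lemma vecNorm_triangle_bounds {k : ℕ} (X Y : Fin k → ℝ) :
    vecNorm Y - vecNorm (X - Y) ≤ vecNorm X ∧ vecNorm X ≤ vecNorm Y + vecNorm (X - Y) := by
  constructor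
  · have h := vecNorm_add_le X (Y - X)
    have e : X + (Y - X) = Y := by abel
    rw [e] at h
    have e2 : vecNorm (Y - X) = vecNorm (X - Y) := by
      rw [← vecNorm_neg (Y - X)]; congr 1; abel
    linarith [e2 ▸ h]
  · have h := vecNorm_add_le Y (X - Y)
    have e : Y + (X - Y) = X := by abel
    rw [e] at h
    linarith

lemma dot_mulVec_left {k l : ℕ} (M : Matrix (Fin k) (Fin l) ℝ) (x : Fin l → ℝ)
    (y : Fin k → ℝ) : (M *ᵥ x) ⬝ᵥ y = x ⬝ᵥ (Mᵀ *ᵥ y) := by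
  rw [dotProduct_mulVec, vecMul_transpose]

lemma vecNorm_mulVec_of_orth {k l : ℕ} (U : Matrix (Fin k) (Fin l) ℝ)
    (hU : Uᵀ * U = 1) (z : Fin l → ℝ) : vecNorm (U *ᵥ z) = vecNorm z := by
  rw [vecNorm_eq_sqrt_dot, vecNorm_eq_sqrt_dot z]
  congr 1
  rw [dot_mulVec_left, Matrix.mulVec_mulVec, hU, Matrix.one_mulVec]

lemma vecNorm_single {k : ℕ} (j : Fin k) (a : ℝ) : vecNorm (Pi.single j a) = |a| := by
  classical
  rw [vecNorm]
  have : ∑ i, (Pi.single j a : Fin k → ℝ) i ^ 2 = a ^ 2 := by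
    rw [Finset.sum_eq_single j]
    · simp
    · intro b _ hb; simp [Pi.single_apply, hb]
    · intro hj; exact absurd (Finset.mem_univ j) hj
  rw [this, Real.sqrt_sq_eq_abs]

lemma le_of_sq_le_sq' {a b : ℝ} (ha : 0 ≤ a) (hb : 0 ≤ b) (h : a ^ 2 ≤ b ^ 2) : a ≤ b := by
  nlinarith

lemma vecNorm_scale_bounds {k : ℕ} [Nonempty (Fin k)] (f x : Fin k → ℝ) {a b : ℝ} (ha : 0 ≤ a)
    (h1 : ∀ j, a ≤ f j) (h2 : ∀ j, f j ≤ b) :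
    a * vecNorm x ≤ vecNorm (fun j => f j * x j) ∧
      vecNorm (fun j => f j * x j) ≤ b * vecNorm x := by
  have hb : 0 ≤ b := le_trans ha (le_trans (h1 (Classical.arbitrary _)) (h2 _))
  have hx2 : vecNorm x ^ 2 = ∑ j, x j ^ 2 := Real.sq_sqrt (by positivity)
  have hf2 : vecNorm (fun j => f j * x j) ^ 2 = ∑ j, (f j * x j) ^ 2 :=
    Real.sq_sqrt (by positivity)
  constructor
  · refine le_of_sq_le_sq' (mul_nonneg ha (vecNorm_nonneg _)) (vecNorm_nonneg _) ?_
    rw [mul_pow, hx2, hf2, Finset.mul_sum]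
    refine Finset.sum_le_sum fun j _ => ?_
    rw [mul_pow]
    exact mul_le_mul_of_nonneg_right (pow_le_pow_left₀ ha (h1 j) 2) (sq_nonneg _)
  · refine le_of_sq_le_sq' (vecNorm_nonneg _) (mul_nonneg hb (vecNorm_nonneg _)) ?_
    rw [mul_pow, hx2, hf2, Finset.mul_sum]
    refine Finset.sum_le_sum fun j _ => ?_
    rw [mul_pow]
    refine mul_le_mul_of_nonneg_right (pow_le_pow_left₀ ?_ (h2 j) 2) (sq_nonneg _)
    exact le_trans ha (h1 j)

/-- Proposition 3.6: if the backward error of the low-precision SVD is small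
enough relative to `κ₂(A)`, then the preconditioned matrix satisfies
`κ₂ᴰ(Ã) ≤ 3`. -/
theorem scaled_cond_le_three
    {m n : ℕ} (hmn : n ≤ m)
    (A : Matrix (Fin m) (Fin n) ℝ) (hrank : A.rank = n)
    (uℓ u p₆ : ℝ) (huℓ : 0 < uℓ) (hu : 0 < u) (hp₆ : 0 < p₆)
    (ΔA : Matrix (Fin m) (Fin n) ℝ)
    (Uℓ : Matrix (Fin m) (Fin n) ℝ) (σd : Fin n → ℝ)
    (V ΔV : Matrix (Fin n) (Fin n) ℝ)
    (hUℓ : Uℓᵀ * Uℓ = 1)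
    (hσd : ∀ i, 0 ≤ σd i)
    (horth : (V + ΔV)ᵀ * (V + ΔV) = 1)
    (hfact : A + ΔA = Uℓ * Matrix.diagonal σd * (V + ΔV)ᵀ)
    (hΔA : specNorm ΔA ≤ p₆ * uℓ * specNorm A)
    (hΔV : specNorm ΔV ≤ p₆ * u)
    (hV : specNorm (Vᵀ * V - 1) ≤ p₆ * u)
    (hcond : 5 * p₆ * (uℓ + u) * kappa2 A ≤ 1) :
    scaledCond (A * V) ≤ 3 := by
  rcases Nat.eq_zero_or_pos n with hn | hn
  · subst hn
    unfold scaledCond kappa2 specNorm sMin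
    rw [Real.iSup_of_isEmpty, Real.iInf_of_isEmpty]
    norm_num
  haveI : Nonempty (Fin n) := ⟨⟨0, hn⟩⟩
  set W := V + ΔV with hWdef
  set Sg := Matrix.diagonal σd with hSgdef
  set s := sMin A with hsdef
  set S := specNorm A with hSdef
  have hspos : 0 < s := sMin_pos_of_rank A hrank
  have hS0 : 0 ≤ S := specNorm_nonneg A
  -- the combined perturbation bound
  have hdelta : (p₆ * uℓ + p₆ * u) * S ≤ s / 5 := by
    unfold kappa2 at hcond
    rw [← hSdef, ← hsdef] at hcond
    have h2 := mul_le_mul_of_nonneg_right hcond hspos.le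
    rw [one_mul, mul_assoc, div_mul_cancel₀ _ (ne_of_gt hspos)] at h2
    nlinarith
  -- matrix identity
  have h1 : (A + ΔA) * W = Uℓ * Sg := by
    rw [hfact, Matrix.mul_assoc, horth, Matrix.mul_one]
  have hid : A * V = Uℓ * Sg - A * ΔV - ΔA * W := by
    rw [← h1, hWdef]
    rw [Matrix.add_mul, Matrix.mul_add, Matrix.mul_add]
    abel
  -- norm preservations
  have hUnorm : ∀ z : Fin n → ℝ, vecNorm (Uℓ *ᵥ z) = vecNorm z :=
    vecNorm_mulVec_of_orth Uℓ hUℓ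
  have hWnorm : ∀ z : Fin n → ℝ, vecNorm (W *ᵥ z) = vecNorm z :=
    vecNorm_mulVec_of_orth W horth
  -- the error bound (B1)
  have hE : ∀ y : Fin n → ℝ,
      vecNorm ((A * V) *ᵥ y - (Uℓ * Sg) *ᵥ y) ≤ s / 5 * vecNorm y := by
    intro y
    have hdec : (A * V) *ᵥ y - (Uℓ * Sg) *ᵥ y
        = -(A *ᵥ (ΔV *ᵥ y) + ΔA *ᵥ (W *ᵥ y)) := by
      rw [hid, Matrix.sub_mulVec, Matrix.sub_mulVec,
        ← Matrix.mulVec_mulVec y A ΔV, ← Matrix.mulVec_mulVec y ΔA W]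
      abel
    rw [hdec, vecNorm_neg]
    have e1 : vecNorm (ΔV *ᵥ y) ≤ p₆ * u * vecNorm y :=
      le_trans (vecNorm_mulVec_le ΔV y)
        (mul_le_mul_of_nonneg_right hΔV (vecNorm_nonneg y))
    have e2 : vecNorm (A *ᵥ (ΔV *ᵥ y)) ≤ S * (p₆ * u * vecNorm y) :=
      le_trans (vecNorm_mulVec_le A _) (mul_le_mul_of_nonneg_left e1 hS0)
    have e3 : vecNorm (ΔA *ᵥ (W *ᵥ y)) ≤ p₆ * uℓ * S * vecNorm y := by
      have h4 := vecNorm_mulVec_le ΔA (W *ᵥ y)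
      rw [hWnorm y] at h4
      exact le_trans h4 (mul_le_mul_of_nonneg_right hΔA (vecNorm_nonneg y))
    calc vecNorm (A *ᵥ (ΔV *ᵥ y) + ΔA *ᵥ (W *ᵥ y))
        ≤ vecNorm (A *ᵥ (ΔV *ᵥ y)) + vecNorm (ΔA *ᵥ (W *ᵥ y)) := vecNorm_add_le _ _
    _ ≤ S * (p₆ * u * vecNorm y) + p₆ * uℓ * S * vecNorm y := add_le_add e2 e3
    _ = (p₆ * uℓ + p₆ * u) * S * vecNorm y := by ring
    _ ≤ s / 5 * vecNorm y := mul_le_mul_of_nonneg_right hdelta (vecNorm_nonneg y)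
  -- lower bound for Σ (B2)
  have hSglow : ∀ y : Fin n → ℝ, 4 / 5 * s * vecNorm y ≤ vecNorm (Sg *ᵥ y) := by
    intro y
    have e0 : vecNorm (Sg *ᵥ y) = vecNorm ((A + ΔA) *ᵥ (W *ᵥ y)) := by
      rw [← hUnorm (Sg *ᵥ y), Matrix.mulVec_mulVec, ← h1, ← Matrix.mulVec_mulVec]
    have e1 : (A + ΔA) *ᵥ (W *ᵥ y) = A *ᵥ (W *ᵥ y) + ΔA *ᵥ (W *ᵥ y) := by
      rw [Matrix.add_mulVec]
    have e2 : s * vecNorm y ≤ vecNorm (A *ᵥ (W *ᵥ y)) := by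
      have h4 := sMin_mul_le_vecNorm_mulVec A (W *ᵥ y)
      rwa [hWnorm y] at h4
    have e3 : vecNorm (ΔA *ᵥ (W *ᵥ y)) ≤ s / 5 * vecNorm y := by
      have h4 := vecNorm_mulVec_le ΔA (W *ᵥ y)
      rw [hWnorm y] at h4
      have h5 : specNorm ΔA * vecNorm y ≤ p₆ * uℓ * S * vecNorm y :=
        mul_le_mul_of_nonneg_right hΔA (vecNorm_nonneg y)
      have h6 : p₆ * uℓ * S ≤ s / 5 := by nlinarith [mul_nonneg (mul_nonneg hp₆.le hu.le) hS0]
      exact le_trans h4 (le_trans h5 (mul_le_mul_of_nonneg_right h6 (vecNorm_nonneg y)))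
    have e4 := (vecNorm_triangle_bounds ((A + ΔA) *ᵥ (W *ᵥ y)) (A *ᵥ (W *ᵥ y))).1
    have e5 : (A + ΔA) *ᵥ (W *ᵥ y) - A *ᵥ (W *ᵥ y) = ΔA *ᵥ (W *ᵥ y) := by
      rw [e1]; abel
    rw [e5] at e4
    rw [e0]
    linarith
  -- two-sided bound (B4)
  have hB4 : ∀ y : Fin n → ℝ,
      3 / 4 * vecNorm (Sg *ᵥ y) ≤ vecNorm ((A * V) *ᵥ y) ∧
        vecNorm ((A * V) *ᵥ y) ≤ 5 / 4 * vecNorm (Sg *ᵥ y) := by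
    intro y
    have hquarter : vecNorm ((A * V) *ᵥ y - (Uℓ * Sg) *ᵥ y)
        ≤ 1 / 4 * vecNorm (Sg *ᵥ y) := by
      have := hE y
      have h2 := hSglow y
      linarith
    have hUeq : vecNorm ((Uℓ * Sg) *ᵥ y) = vecNorm (Sg *ᵥ y) := by
      rw [← Matrix.mulVec_mulVec, hUnorm]
    have ht := vecNorm_triangle_bounds ((A * V) *ᵥ y) ((Uℓ * Sg) *ᵥ y)
    rw [hUeq] at ht
    exact ⟨by linarith [ht.1], by linarith [ht.2]⟩
  -- column data
  set c : Fin n → ℝ := fun j => vecNorm ((A * V) *ᵥ Pi.single j 1) with hcdef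
  have hcol : ∀ j, (fun i => (A * V) i j) = (A * V) *ᵥ Pi.single j 1 := by
    intro j
    funext i
    rw [Matrix.mulVec_single]
    simp
  have hSgej : ∀ j, vecNorm (Sg *ᵥ Pi.single j 1) = σd j := by
    intro j
    rw [hSgdef, Matrix.diagonal_mulVec_single, mul_one, vecNorm_single, abs_of_nonneg (hσd j)]
  have hej : ∀ j : Fin n, vecNorm (Pi.single j 1 : Fin n → ℝ) = 1 := by
    intro j; rw [vecNorm_single, abs_one]
  have hσlow : ∀ j, 4 / 5 * s ≤ σd j := by
    intro j
    have := hSglow (Pi.single j 1)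
    rw [hSgej j, hej j, mul_one] at this
    exact this
  have hσpos : ∀ j, 0 < σd j := fun j => lt_of_lt_of_le (by linarith) (hσlow j)
  have hcb : ∀ j, 3 / 4 * σd j ≤ c j ∧ c j ≤ 5 / 4 * σd j := by
    intro j
    have := hB4 (Pi.single j 1)
    rw [hSgej j] at this
    exact this
  have hcpos : ∀ j, 0 < c j := fun j => lt_of_lt_of_le (by nlinarith [hσpos j]) (hcb j).1
  -- the scaling matrix
  have hDx : ∀ x : Fin n → ℝ, colScale (A * V) *ᵥ x = fun j => (c j)⁻¹ * x j := by
    intro x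
    funext j
    unfold colScale
    rw [Matrix.mulVec_diagonal, hcol j]
  -- ratio bounds
  have hf : ∀ j, 4 / 5 ≤ σd j * (c j)⁻¹ ∧ σd j * (c j)⁻¹ ≤ 4 / 3 := by
    intro j
    obtain ⟨hl, hu'⟩ := hcb j
    have hc := hcpos j
    constructor
    · rw [← div_eq_mul_inv, le_div_iff₀ hc]; linarith
    · rw [← div_eq_mul_inv, div_le_iff₀ hc]; linarith
  -- final bounds for the scaled matrix
  have hfinal : ∀ x : Fin n → ℝ,
      3 / 5 * vecNorm x ≤ vecNorm ((A * V * colScale (A * V)) *ᵥ x) ∧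
        vecNorm ((A * V * colScale (A * V)) *ᵥ x) ≤ 5 / 3 * vecNorm x := by
    intro x
    have hmv : (A * V * colScale (A * V)) *ᵥ x
        = (A * V) *ᵥ (colScale (A * V) *ᵥ x) := (Matrix.mulVec_mulVec _ _ _).symm
    set y : Fin n → ℝ := colScale (A * V) *ᵥ x with hydef
    have hSgy : Sg *ᵥ y = fun j => (σd j * (c j)⁻¹) * x j := by
      funext j
      have : (Sg *ᵥ y) j = σd j * y j := Matrix.mulVec_diagonal _ _ _
      rw [this, hydef, hDx x]
      ring
    have hsc := vecNorm_scale_bounds (fun j => σd j * (c j)⁻¹) x (by norm_num)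
      (fun j => (hf j).1) (fun j => (hf j).2)
    rw [← hSgy] at hsc
    obtain ⟨hsc1, hsc2⟩ := hsc
    have hb4 := hB4 y
    rw [hmv]
    constructor
    · calc 3 / 5 * vecNorm x = 3 / 4 * (4 / 5 * vecNorm x) := by ring
      _ ≤ 3 / 4 * vecNorm (Sg *ᵥ y) := by linarith
      _ ≤ vecNorm ((A * V) *ᵥ y) := hb4.1
    · calc vecNorm ((A * V) *ᵥ y) ≤ 5 / 4 * vecNorm (Sg *ᵥ y) := hb4.2
      _ ≤ 5 / 4 * (4 / 3 * vecNorm x) := by linarith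
      _ = 5 / 3 * vecNorm x := by ring
  have hk := kappa2_le_of_bounds (A * V * colScale (A * V)) (by norm_num : (0:ℝ) < 3/5)
    (fun x => hfinal x)
  unfold scaledCond
  calc kappa2 (A * V * colScale (A * V)) ≤ (5/3) / (3/5) := hk
  _ ≤ 3 := by norm_num
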